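/- arXiv:2202.08984 — 3 statements merged into one kernel-verified Lean document; each statement's English description precedes it below -/
import Mathlib

section
/- For all nonnegative integers n, (xD)^n applied to x/(1-x^2) equals x B_n(x^2)/(1-x^2)^{n+1}, where D = d/dx and B_n is the n-th type B Eulerian polynomial; equivalently, sum_{k>=0} (2k+1)^n x^{2k+1} = x B_n(x^2)/(1-x^2)^{n+1} as formal power series. -/
open Polynomial PowerSeries

/-- Type B Eulerian polynomials. -/
noncomputable def eulerianB : ℕ → Polynomial ℚ
  | 0 => 1
  | n + 1 =>
      (Polynomial.C (2 * ((n : ℚ) + 1)) * Polynomial.X + 1 - Polynomial.X) * eulerianB n +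
        2 * Polynomial.X * (1 - Polynomial.X) * derivative (eulerianB n)

private noncomputable def S (n : ℕ) : PowerSeries ℚ :=
  PowerSeries.mk (fun m => if Odd m then (m : ℚ) ^ n else 0)

private lemma S_succ (n : ℕ) : S (n+1) = PowerSeries.X * d⁄dX ℚ (S n) := by
  ext m
  cases m with
  | zero => simp [S]
  | succ k =>
    rw [PowerSeries.coeff_succ_X_mul, PowerSeries.coeff_derivative]
    simp only [S, PowerSeries.coeff_mk]
    split_ifs with h
    · push_cast; ring
    · simp

private lemma S_base : (1 - (PowerSeries.X : PowerSeries ℚ)^2) * S 0 = PowerSeries.X := by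
  ext m
  rw [sub_mul, one_mul, map_sub]
  match m with
  | 0 => simp [S, Nat.odd_iff]
  | 1 =>
      have : (PowerSeries.X:PowerSeries ℚ)^2 * S 0 = PowerSeries.X * (PowerSeries.X * S 0) := by
        ring
      rw [this, PowerSeries.coeff_succ_X_mul]
      simp [S]
  | (k+2) =>
      have h2 : PowerSeries.coeff (R := ℚ) (k+2) ((PowerSeries.X:PowerSeries ℚ)^2 * S 0)
          = PowerSeries.coeff (R := ℚ) k (S 0) := by
        simpa using PowerSeries.coeff_X_pow_mul (S 0) 2 k
      rw [h2]
      simp [S, PowerSeries.coeff_X, Nat.odd_add]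

private lemma coe_two : ((2 : Polynomial ℚ) : PowerSeries ℚ) = 2 := by
  rw [← Polynomial.coeToPowerSeries.ringHom_apply]; exact map_ofNat _ 2

private lemma P_succ (n : ℕ) :
    (((eulerianB (n+1)).comp (Polynomial.X ^ 2) : Polynomial ℚ) : PowerSeries ℚ) =
      (2 * ((n : PowerSeries ℚ) + 1) * PowerSeries.X ^ 2 + 1 - PowerSeries.X ^ 2) *
          (((eulerianB n).comp (Polynomial.X ^ 2) : Polynomial ℚ) : PowerSeries ℚ) +
        2 * PowerSeries.X ^ 2 * (1 - PowerSeries.X ^ 2) *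
          ((((derivative (eulerianB n)).comp (Polynomial.X ^ 2)) : Polynomial ℚ) : PowerSeries ℚ) := by
  simp only [eulerianB, add_comp, sub_comp, mul_comp, C_comp, X_comp, one_comp, ofNat_comp]
  push_cast
  simp only [map_add, map_mul, map_ofNat, map_natCast, map_one, coe_two]

private lemma dP (p : Polynomial ℚ) :
    d⁄dX ℚ ((p.comp (Polynomial.X ^ 2) : Polynomial ℚ) : PowerSeries ℚ) =
      2 * PowerSeries.X * (((derivative p).comp (Polynomial.X ^ 2) : Polynomial ℚ) : PowerSeries ℚ) := by
  rw [PowerSeries.derivative_coe, Polynomial.derivative_comp, Polynomial.derivative_X_pow]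
  push_cast
  simp only [map_add, map_mul, map_ofNat, map_natCast, map_one, coe_two, pow_one,
    Nat.cast_ofNat]

theorem stmt2 (n : ℕ) :
    (1 - (PowerSeries.X : PowerSeries ℚ) ^ 2) ^ (n + 1) *
        PowerSeries.mk (fun m => if Odd m then (m : ℚ) ^ n else 0) =
      PowerSeries.X * (((eulerianB n).comp (Polynomial.X ^ 2) : Polynomial ℚ) : PowerSeries ℚ) := by
  induction n with
  | zero =>
      have : eulerianB 0 = 1 := rfl
      simpa [this, S] using S_base
  | succ n ih =>
      show (1 - (PowerSeries.X : PowerSeries ℚ) ^ 2) ^ (n + 2) * S (n+1) = _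
      have ih' : (1 - (PowerSeries.X : PowerSeries ℚ) ^ 2) ^ (n + 1) * S n =
          PowerSeries.X * (((eulerianB n).comp (Polynomial.X ^ 2) : Polynomial ℚ) : PowerSeries ℚ) := ih
      have h2 := congrArg (d⁄dX ℚ) ih'
      rw [Derivation.leibniz, Derivation.leibniz, Derivation.leibniz_pow] at h2
      simp only [map_sub, Derivation.map_one_eq_zero, Derivation.leibniz, Derivation.leibniz_pow,
        PowerSeries.derivative_X, smul_eq_mul, nsmul_eq_mul, dP, mul_one, pow_one, zero_sub,
        Nat.cast_add, Nat.cast_one, Nat.cast_ofNat, Nat.add_sub_cancel] at h2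
      rw [S_succ, P_succ]
      linear_combination (PowerSeries.X * (1 - (PowerSeries.X : PowerSeries ℚ)^2)) * h2 +
        (2 * ((n : PowerSeries ℚ) + 1) * PowerSeries.X ^ 2) * ih'
end

section
/- For all n >= 2, N(D_n, x^2) = (1+x)^{2n} + sum_{i=1}^n ( binom(n,i) binom(2i,i) - n C_{i-1} binom(n-2,i-2) ) (-x)^i (1+x)^{2n-2i}, and the coefficients binom(n,i) binom(2i,i) - n C_{i-1} binom(n-2,i-2) are nonnegative for 1 <= i <= n; hence N(D_n,x^2) is alternatingly gamma-positive. -/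
open Polynomial Finset

/-- The type A Narayana polynomial `N(A_n, x)`. -/
noncomputable def narayanaA (n : ℕ) : Polynomial ℚ :=
  ∑ k ∈ Finset.range (n + 1),
    C ((1 / ((n : ℚ) + 1)) * ((n + 1).choose (k + 1)) * ((n + 1).choose k)) * X ^ k

/-- The type B Narayana polynomial `N(B_n, x)`. -/
noncomputable def narayanaB (n : ℕ) : Polynomial ℚ :=
  ∑ k ∈ Finset.range (n + 1), C ((n.choose k : ℚ) ^ 2) * X ^ k

/-- The type D Narayana polynomial `N(D_n, x) = N(B_n, x) - n x N(A_{n-2}, x)`. -/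
noncomputable def narayanaD (n : ℕ) : Polynomial ℚ :=
  narayanaB n - C (n : ℚ) * X * narayanaA (n - 2)

/-- The alternating γ-coefficients of `N(D_n, x²)`; here `binom(n-2, i-2) = 0` when `i < 2`. -/
noncomputable def coefD (n i : ℕ) : ℚ :=
  (n.choose i : ℚ) * ((2 * i).choose i) -
    (if 2 ≤ i then (n : ℚ) * (catalan (i - 1)) * ((n - 2).choose (i - 2)) else 0)

lemma coeff_one_sub_pow {R : Type*} [CommRing R] (m k : ℕ) :
    ((1 - X : R[X]) ^ m).coeff k = (-1) ^ k * (m.choose k : R) := by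
  have h : (1 - X : R[X]) ^ m = ∑ j ∈ range (m + 1), C ((-1) ^ j * (m.choose j : R)) * X ^ j := by
    rw [sub_eq_add_neg, add_comm, add_pow]
    refine Finset.sum_congr rfl fun j hj => ?_
    rw [neg_pow]
    simp only [map_mul, map_pow, map_neg, map_one, C_eq_natCast]
    ring
  rw [h, finset_sum_coeff]
  simp only [coeff_C_mul, coeff_X_pow, mul_ite, mul_one, mul_zero]
  rw [Finset.sum_ite_eq (range (m + 1)) k]
  by_cases hk : k ∈ range (m + 1)
  · rw [if_pos hk]
  · rw [if_neg hk]
    rw [Nat.choose_eq_zero_of_lt (by simpa using hk)]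
    simp

lemma coeff_prod_key {R : Type*} [CommRing R] (c : R) (N t : ℕ) (ht : t ≤ N) :
    (((1 + C c * X) ^ N * (C c + X) ^ N : R[X])).coeff t
      = ∑ k ∈ range (t + 1), (N.choose k : R) * (N.choose (t - k) : R)
          * c ^ k * c ^ (N - (t - k)) := by
  have h1 : (1 + C c * X : R[X]) ^ N
      = ∑ k ∈ range (N + 1), C ((N.choose k : R) * c ^ k) * X ^ k := by
    rw [add_comm, add_pow]
    refine Finset.sum_congr rfl fun k hk => ?_
    simp only [map_mul, map_pow, C_eq_natCast, mul_pow, one_pow, mul_one]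
    ring
  have h2 : (C c + X : R[X]) ^ N
      = ∑ j ∈ range (N + 1), C ((N.choose j : R) * c ^ (N - j)) * X ^ j := by
    rw [add_comm, add_pow]
    refine Finset.sum_congr rfl fun j hj => ?_
    simp only [map_mul, map_pow, C_eq_natCast]
    ring
  rw [h1, h2, Finset.sum_mul_sum, finset_sum_coeff]
  have hterm : ∀ k j : ℕ,
      ((C ((N.choose k : R) * c ^ k) * X ^ k) * (C ((N.choose j : R) * c ^ (N - j)) * X ^ j)).coeff t
        = if t = k + j then (N.choose k : R) * (N.choose j : R) * c ^ k * c ^ (N - j) else 0 := by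
    intro k j
    have : (C ((N.choose k : R) * c ^ k) * X ^ k) * (C ((N.choose j : R) * c ^ (N - j)) * X ^ j)
        = C ((N.choose k : R) * (N.choose j : R) * c ^ k * c ^ (N - j)) * X ^ (k + j) := by
      simp only [map_mul]
      ring
    rw [this, coeff_C_mul, coeff_X_pow]
    split <;> simp
  have hinner : ∀ k ∈ range (N + 1),
      (∑ j ∈ range (N + 1),
        ((C ((N.choose k : R) * c ^ k) * X ^ k) * (C ((N.choose j : R) * c ^ (N - j)) * X ^ j)).coeff t)
      = if k ≤ t then (N.choose k : R) * (N.choose (t - k) : R) * c ^ k * c ^ (N - (t - k)) else 0 := by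
    intro k _
    simp only [hterm]
    by_cases hk : k ≤ t
    · rw [if_pos hk, Finset.sum_eq_single (t - k)]
      · rw [if_pos (by omega)]
      · intro j hj hne
        rw [if_neg (by omega)]
      · intro h
        exact absurd (Finset.mem_range.mpr (by omega)) h
    · rw [if_neg hk]
      exact Finset.sum_eq_zero fun j hj => if_neg (by omega)
  simp only [finset_sum_coeff]
  calc (∑ k ∈ range (N + 1), ∑ j ∈ range (N + 1),
        ((C ((N.choose k : R) * c ^ k) * X ^ k) * (C ((N.choose j : R) * c ^ (N - j)) * X ^ j)).coeff t)
      = ∑ k ∈ range (N + 1), (if k ≤ t then (N.choose k : R) * (N.choose (t - k) : R) * c ^ k * c ^ (N - (t - k)) else 0) :=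
        Finset.sum_congr rfl hinner
    _ = ∑ k ∈ range (t + 1), (if k ≤ t then (N.choose k : R) * (N.choose (t - k) : R) * c ^ k * c ^ (N - (t - k)) else 0) := by
        refine (Finset.sum_subset (by intro x hx; simp at hx ⊢; omega) ?_).symm
        intro k hk1 hk2
        rw [if_neg (by simp at hk1 hk2 ⊢; omega)]
    _ = _ := by
        refine Finset.sum_congr rfl fun k hk => ?_
        rw [if_pos (by simp at hk; omega)]

lemma coeff_gamma_key {R : Type*} [CommRing R] (a b : R) (N t : ℕ) :
    ((C a * X + C b * (1 - X) ^ 2) ^ N).coeff t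
      = ∑ i ∈ range (N + 1),
          if N - i ≤ t ∧ i ≤ N then
            (N.choose i : R) * b ^ i * a ^ (N - i)
              * ((-1) ^ (t - (N - i)) * ((2 * i).choose (t - (N - i)) : R))
          else 0 := by
  rw [add_comm, add_pow, finset_sum_coeff]
  refine Finset.sum_congr rfl fun i hi => ?_
  have hiN : i ≤ N := by simpa using Nat.lt_succ_iff.mp (Finset.mem_range.mp hi)
  have hrw : (C b * (1 - X) ^ 2) ^ i * (C a * X) ^ (N - i) * ((N.choose i : ℕ) : R[X])
      = C ((N.choose i : R) * b ^ i * a ^ (N - i)) * ((1 - X) ^ (2 * i) * X ^ (N - i)) := by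
    simp only [map_mul, C_eq_natCast, mul_pow, map_pow, pow_mul]
    ring
  rw [hrw, coeff_C_mul, coeff_mul_X_pow']
  by_cases hcond : N - i ≤ t
  · rw [if_pos hcond, if_pos ⟨hcond, hiN⟩, coeff_one_sub_pow]
  · rw [if_neg hcond, if_neg (by tauto)]
    simp

lemma bridge {R : Type*} [CommRing R] (c : R) (N t : ℕ) (ht : t ≤ N) :
    ∑ k ∈ range (t + 1), (N.choose k : R) * (N.choose (t - k) : R) * c ^ k * c ^ (N - (t - k))
      = ∑ i ∈ range (N + 1),
          if N - i ≤ t ∧ i ≤ N then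
            (N.choose i : R) * c ^ i * ((1 + c) ^ 2) ^ (N - i)
              * ((-1) ^ (t - (N - i)) * ((2 * i).choose (t - (N - i)) : R))
          else 0 := by
  rw [← coeff_prod_key c N t ht, ← coeff_gamma_key ((1 + c) ^ 2) c N t]
  congr 1
  rw [← mul_pow]
  congr 1
  simp only [map_pow, map_add, map_one]
  ring

set_option maxRecDepth 8000 in
lemma lemmaB (n : ℕ) : (narayanaB n).comp (X ^ 2)
    = ∑ i ∈ range (n + 1),
        C ((n.choose i : ℚ) * ((2 * i).choose i : ℚ)) * (-X) ^ i * (1 + X) ^ (2 * n - 2 * i) := by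
  have h := bridge (X : ℚ[X]) n n le_rfl
  have hL : (narayanaB n).comp (X ^ 2)
      = ∑ k ∈ range (n + 1), (n.choose k : ℚ[X]) * (n.choose (n - k) : ℚ[X]) * X ^ k * X ^ (n - (n - k)) := by
    rw [narayanaB, Polynomial.sum_comp]
    refine Finset.sum_congr rfl fun k hk => ?_
    have hkn : k ≤ n := by simpa [Nat.lt_succ_iff] using hk
    rw [Nat.choose_symm hkn]
    have h1 : n - (n - k) = k := by omega
    rw [h1]
    simp only [Polynomial.mul_comp, Polynomial.C_comp, Polynomial.pow_comp, Polynomial.X_comp,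
      Polynomial.natCast_comp, map_pow, C_eq_natCast]
    ring
  rw [hL, h]
  refine Finset.sum_congr rfl fun i hi => ?_
  have hin : i ≤ n := by simpa [Nat.lt_succ_iff] using hi
  rw [if_pos ⟨by omega, hin⟩]
  have h1 : n - (n - i) = i := by omega
  have h2 : ((1 + X : ℚ[X]) ^ 2) ^ (n - i) = (1 + X) ^ (2 * n - 2 * i) := by
    rw [← pow_mul]
    congr 1
    omega
  rw [h1, h2]
  simp only [map_mul, C_eq_natCast]
  rw [neg_pow]
  ring

lemma nat_keyA (N a : ℕ) (hN : 1 ≤ N) (ha : 1 ≤ a) :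
    N * catalan a * ((N - 1).choose (a - 1)) = N.choose a * ((2 * a).choose (a - 1)) := by
  obtain ⟨M, rfl⟩ : ∃ M, N = M + 1 := ⟨N - 1, by omega⟩
  obtain ⟨b, rfl⟩ : ∃ b, a = b + 1 := ⟨a - 1, by omega⟩
  simp only [Nat.add_sub_cancel]
  have h1 : (2 * (b + 1)).choose b = (b + 1) * catalan (b + 1) := by
    have hc := Nat.choose_succ_right_eq (2 * (b + 1)) b
    have hcb : (2 * (b + 1)).choose (b + 1) = (b + 2) * catalan (b + 1) := by
      have h0 := succ_mul_catalan_eq_centralBinom (b + 1)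
      rw [Nat.centralBinom_eq_two_mul_choose] at h0
      exact h0.symm
    have h2 : 2 * (b + 1) - b = b + 2 := by omega
    rw [hcb, h2] at hc
    have h3 : (b + 2) * ((b + 1) * catalan (b + 1)) = (b + 2) * ((2 * (b + 1)).choose b) := by
      calc (b + 2) * ((b + 1) * catalan (b + 1)) = (b + 2) * catalan (b + 1) * (b + 1) := by ring
        _ = (2 * (b + 1)).choose b * (b + 2) := hc
        _ = (b + 2) * ((2 * (b + 1)).choose b) := by ring
    exact (Nat.eq_of_mul_eq_mul_left (by omega) h3).symm
  have h2 : (M + 1) * M.choose b = (M + 1).choose (b + 1) * (b + 1) :=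
    Nat.add_one_mul_choose_eq M b
  calc (M + 1) * catalan (b + 1) * M.choose b
      = catalan (b + 1) * ((M + 1) * M.choose b) := by ring
    _ = catalan (b + 1) * ((M + 1).choose (b + 1) * (b + 1)) := by rw [h2]
    _ = (M + 1).choose (b + 1) * ((b + 1) * catalan (b + 1)) := by ring
    _ = (M + 1).choose (b + 1) * ((2 * (b + 1)).choose b) := by rw [h1]

set_option maxRecDepth 8000 in
lemma lemmaA (n : ℕ) (hn : 2 ≤ n) :
    C (n : ℚ) * X ^ 2 * (narayanaA (n - 2)).comp (X ^ 2)
      = ∑ i ∈ Icc 2 n,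
          C ((n : ℚ) * (catalan (i - 1)) * ((n - 2).choose (i - 2))) * (-X) ^ i
            * (1 + X) ^ (2 * n - 2 * i) := by
  have hcast : ((n - 1 : ℕ) : ℚ) = (n : ℚ) - 1 := by
    have := Nat.cast_sub (show 1 ≤ n by omega) (R := ℚ)
    simpa using this
  have hne : ((n : ℚ) - 1) ≠ 0 := by
    have : (2 : ℚ) ≤ (n : ℚ) := by exact_mod_cast hn
    linarith
  have h := bridge (X : ℚ[X]) (n - 1) (n - 2) (by omega)
  -- left side of bridge equals C (n-1) * X * comp
  have hL : C ((n : ℚ) - 1) * X * (narayanaA (n - 2)).comp (X ^ 2)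
      = ∑ k ∈ range (n - 2 + 1), ((n - 1).choose k : ℚ[X]) * ((n - 1).choose (n - 2 - k) : ℚ[X])
          * X ^ k * X ^ ((n - 1) - (n - 2 - k)) := by
    rw [narayanaA, Polynomial.sum_comp, Finset.mul_sum]
    refine Finset.sum_congr rfl fun k hk => ?_
    have hkn : k ≤ n - 2 := by simpa [Nat.lt_succ_iff] using hk
    have e1 : n - 2 + 1 = n - 1 := by omega
    have e2 : (n - 1).choose (n - 2 - k) = (n - 1).choose (k + 1) :=
      Nat.choose_symm_of_eq_add (by omega)
    have e3 : (n - 1) - (n - 2 - k) = k + 1 := by omega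
    have e4 : ((n - 2 : ℕ) : ℚ) + 1 = (n : ℚ) - 1 := by
      have := Nat.cast_sub (show 2 ≤ n by omega) (R := ℚ)
      simp at this
      rw [this]; ring
    rw [e2, e3]
    simp only [Polynomial.mul_comp, Polynomial.C_comp, Polynomial.pow_comp, Polynomial.X_comp,
      Polynomial.natCast_comp, e1, e4, map_mul, C_eq_natCast]
    have hC : C ((n : ℚ) - 1) * C (1 / ((n : ℚ) - 1)) = 1 := by
      rw [← map_mul, mul_one_div, div_self hne, map_one]
    linear_combination (((n - 1).choose (k + 1) : ℚ[X]) * ((n - 1).choose k : ℚ[X]) * X ^ (2 * k + 1)) * hC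
  -- right side of bridge over Icc 1 (n-1)
  have hR : (∑ i ∈ range ((n - 1) + 1),
          if (n - 1) - i ≤ n - 2 ∧ i ≤ n - 1 then
            ((n - 1).choose i : ℚ[X]) * X ^ i * ((1 + X) ^ 2) ^ ((n - 1) - i)
              * ((-1) ^ ((n - 2) - ((n - 1) - i)) * (((2 * i).choose ((n - 2) - ((n - 1) - i)) : ℕ) : ℚ[X]))
          else 0)
      = ∑ i ∈ Icc 1 (n - 1), ((n - 1).choose i : ℚ[X]) * X ^ i * (1 + X) ^ (2 * (n - 1) - 2 * i)
          * ((-1) ^ (i - 1) * (((2 * i).choose (i - 1) : ℕ) : ℚ[X])) := by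
    have hset : (range ((n - 1) + 1)).filter (fun i => (n - 1) - i ≤ n - 2 ∧ i ≤ n - 1) = Icc 1 (n - 1) := by
      ext i; simp only [Finset.mem_filter, Finset.mem_range, Finset.mem_Icc]; omega
    rw [← Finset.sum_filter, hset]
    refine Finset.sum_congr rfl fun i hi => ?_
    have hi' : 1 ≤ i ∧ i ≤ n - 1 := by simpa using hi
    have e1 : (n - 2) - ((n - 1) - i) = i - 1 := by omega
    have e2 : ((1 + X : ℚ[X]) ^ 2) ^ ((n - 1) - i) = (1 + X) ^ (2 * (n - 1) - 2 * i) := by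
      rw [← pow_mul]; congr 1; omega
    rw [e1, e2]
  have key : C ((n : ℚ) - 1) * X * (narayanaA (n - 2)).comp (X ^ 2)
      = ∑ i ∈ Icc 1 (n - 1), ((n - 1).choose i : ℚ[X]) * X ^ i * (1 + X) ^ (2 * (n - 1) - 2 * i)
          * ((-1) ^ (i - 1) * (((2 * i).choose (i - 1) : ℕ) : ℚ[X])) := hL.trans (h.trans hR)
  have hfactor : C (n : ℚ) * X ^ 2 * (narayanaA (n - 2)).comp (X ^ 2)
      = C ((n : ℚ) / ((n : ℚ) - 1)) * X * (C ((n : ℚ) - 1) * X * (narayanaA (n - 2)).comp (X ^ 2)) := by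
    have hd : (n : ℚ) / ((n : ℚ) - 1) * ((n : ℚ) - 1) = (n : ℚ) := div_mul_cancel₀ _ hne
    calc C (n : ℚ) * X ^ 2 * (narayanaA (n - 2)).comp (X ^ 2)
        = C ((n : ℚ) / ((n : ℚ) - 1) * ((n : ℚ) - 1)) * X ^ 2 * (narayanaA (n - 2)).comp (X ^ 2) := by rw [hd]
      _ = _ := by rw [map_mul]; ring
  rw [hfactor, key, Finset.mul_sum]
  refine (Finset.sum_nbij' (fun i => i - 1) (fun j => j + 1) ?_ ?_ ?_ ?_ ?_).symm
  · intro a ha; simp only [Finset.mem_Icc] at ha ⊢; omega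
  · intro b hb; simp only [Finset.mem_Icc] at hb ⊢; omega
  · intro a ha; simp only [Finset.mem_Icc] at ha; show a - 1 + 1 = a; omega
  · intro b hb; simp only [Finset.mem_Icc] at hb; show b + 1 - 1 = b; omega
  · intro i hi
    simp only [Finset.mem_Icc] at hi
    obtain ⟨j, rfl⟩ : ∃ j, i = j + 1 := ⟨i - 1, by omega⟩
    have hj : 1 ≤ j ∧ j ≤ n - 1 := by omega
    simp only [Nat.add_sub_cancel]
    have e1 : (j + 1) - 2 = j - 1 := by omega
    have e3 : 2 * n - 2 * (j + 1) = 2 * (n - 1) - 2 * j := by omega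
    have hnat := nat_keyA (n - 1) j (by omega) hj.1
    have e4 : n - 1 - 1 = n - 2 := by omega
    rw [e4] at hnat
    have hq : ((n : ℚ) - 1) * (catalan j : ℚ) * (((n - 2).choose (j - 1) : ℕ) : ℚ)
        = (((n - 1).choose j : ℕ) : ℚ) * (((2 * j).choose (j - 1) : ℕ) : ℚ) := by
      rw [← hcast]; exact_mod_cast congrArg (fun x : ℕ => (x : ℚ)) hnat
    have hsc : (n : ℚ) * (catalan j : ℚ) * (((n - 2).choose (j - 1) : ℕ) : ℚ)
        = ((n : ℚ) / ((n : ℚ) - 1)) * (((n - 1).choose j : ℕ) : ℚ) * (((2 * j).choose (j - 1) : ℕ) : ℚ) := by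
      field_simp
      linear_combination hq
    have hsign : (-X : ℚ[X]) ^ (j + 1) = (-1) ^ (j - 1) * X ^ (j + 1) := by
      obtain ⟨m, rfl⟩ : ∃ m, j = m + 1 := ⟨j - 1, by omega⟩
      simp only [Nat.add_sub_cancel]
      rw [neg_pow]
      congr 1
      rw [pow_succ, pow_succ]
      ring
    rw [e1, e3, hsc, hsign, map_mul, map_mul, C_eq_natCast, C_eq_natCast]
    ring

lemma nat_ineq (m a : ℕ) (ham : a ≤ m) :
    (m + 2) * catalan (a + 1) * (m.choose a) ≤ (m + 2).choose (a + 2) * ((2 * (a + 2)).choose (a + 2)) := by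
  rw [← Nat.centralBinom_eq_two_mul_choose]
  have e1 : (a + 2) * catalan (a + 1) = Nat.centralBinom (a + 1) := by
    have h0 := succ_mul_catalan_eq_centralBinom (a + 1)
    exact h0
  have e2 : (a + 2) * Nat.centralBinom (a + 2) = 2 * (2 * (a + 1) + 1) * Nat.centralBinom (a + 1) :=
    Nat.succ_mul_centralBinom_succ (a + 1)
  have e3 : (m + 2) * (m + 1).choose (a + 1) = (m + 2).choose (a + 2) * (a + 2) :=
    Nat.add_one_mul_choose_eq (m + 1) (a + 1)
  have e4 : (m + 1) * m.choose a = (m + 1).choose (a + 1) * (a + 1) :=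
    Nat.add_one_mul_choose_eq m a
  set K := (a + 1) * (a + 2) * (a + 2) * (m + 1) with hK
  have hKpos : 0 < K := by positivity
  refine Nat.le_of_mul_le_mul_left ?_ hKpos
  have hKL : K * ((m + 2) * catalan (a + 1) * (m.choose a))
      = Nat.centralBinom (a + 1) * (m + 2).choose (a + 2) * ((a + 1) * (a + 1) * ((a + 2) * (a + 2))) := by
    calc K * ((m + 2) * catalan (a + 1) * (m.choose a))
        = ((a + 2) * catalan (a + 1)) * ((m + 1) * m.choose a) * ((a + 1) * (a + 2) * (m + 2)) := by
          rw [hK]; ring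
      _ = Nat.centralBinom (a + 1) * ((m + 1).choose (a + 1) * (a + 1)) * ((a + 1) * (a + 2) * (m + 2)) := by
          rw [e1, e4]
      _ = Nat.centralBinom (a + 1) * ((m + 2) * (m + 1).choose (a + 1)) * ((a + 1) * (a + 1) * (a + 2)) := by
          ring
      _ = Nat.centralBinom (a + 1) * ((m + 2).choose (a + 2) * (a + 2)) * ((a + 1) * (a + 1) * (a + 2)) := by
          rw [e3]
      _ = _ := by ring
  have hKR : K * ((m + 2).choose (a + 2) * Nat.centralBinom (a + 2))
      = Nat.centralBinom (a + 1) * (m + 2).choose (a + 2) * ((a + 1) * (a + 2) * (m + 1) * (2 * (2 * (a + 1) + 1))) := by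
    calc K * ((m + 2).choose (a + 2) * Nat.centralBinom (a + 2))
        = ((a + 2) * Nat.centralBinom (a + 2)) * (m + 2).choose (a + 2) * ((a + 1) * (a + 2) * (m + 1)) := by
          rw [hK]; ring
      _ = (2 * (2 * (a + 1) + 1) * Nat.centralBinom (a + 1)) * (m + 2).choose (a + 2) * ((a + 1) * (a + 2) * (m + 1)) := by
          rw [e2]
      _ = _ := by ring
  rw [hKL, hKR]
  refine Nat.mul_le_mul_left _ ?_
  have h5 : (a + 1) * (a + 2) ≤ (m + 1) * (2 * (2 * (a + 1) + 1)) := Nat.mul_le_mul (by omega) (by omega)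
  calc (a + 1) * (a + 1) * ((a + 2) * (a + 2)) = ((a + 1) * (a + 2)) * ((a + 1) * (a + 2)) := by ring
    _ ≤ ((a + 1) * (a + 2)) * ((m + 1) * (2 * (2 * (a + 1) + 1))) := Nat.mul_le_mul_left _ h5
    _ = (a + 1) * (a + 2) * (m + 1) * (2 * (2 * (a + 1) + 1)) := by ring

lemma coefD_nonneg (n i : ℕ) (hi : 1 ≤ i) (hin : i ≤ n) : 0 ≤ coefD n i := by
  rw [coefD]
  by_cases h2 : 2 ≤ i
  · rw [if_pos h2, sub_nonneg]
    obtain ⟨a, rfl⟩ : ∃ a, i = a + 2 := ⟨i - 2, by omega⟩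
    obtain ⟨m, rfl⟩ : ∃ m, n = m + 2 := ⟨n - 2, by omega⟩
    have key := nat_ineq m a (by omega)
    rw [show a + 2 - 1 = a + 1 by omega, show a + 2 - 2 = a by omega,
      show m + 2 - 2 = m by omega]
    exact_mod_cast key
  · rw [if_neg h2, sub_zero]
    positivity

theorem stmt16 (n : ℕ) (hn : 2 ≤ n) :
    ((narayanaD n).comp (X ^ 2) =
      (1 + X) ^ (2 * n) +
        ∑ i ∈ Finset.Icc 1 n, C (coefD n i) * (-X) ^ i * (1 + X) ^ (2 * n - 2 * i)) ∧
    ∀ i ∈ Finset.Icc 1 n, 0 ≤ coefD n i := by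
  constructor
  · have hcomp : (narayanaD n).comp (X ^ 2)
        = (narayanaB n).comp (X ^ 2) - C (n : ℚ) * X ^ 2 * (narayanaA (n - 2)).comp (X ^ 2) := by
      rw [narayanaD, Polynomial.sub_comp]
      simp only [Polynomial.mul_comp, Polynomial.C_comp, Polynomial.X_comp]
    rw [hcomp, lemmaB n, lemmaA n hn]
    -- split the range sum
    have hins : range (n + 1) = insert 0 (Icc 1 n) := by
      ext i; simp only [Finset.mem_range, Finset.mem_insert, Finset.mem_Icc]; omega
    have h0 : C ((n.choose 0 : ℚ) * ((2 * 0).choose 0 : ℚ)) * (-X) ^ 0 * (1 + X) ^ (2 * n - 2 * 0)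
        = (1 + X) ^ (2 * n) := by
      simp
    have hBsum : ∑ i ∈ range (n + 1),
          C ((n.choose i : ℚ) * ((2 * i).choose i : ℚ)) * (-X) ^ i * (1 + X) ^ (2 * n - 2 * i)
        = (1 + X) ^ (2 * n) + ∑ i ∈ Icc 1 n,
            C ((n.choose i : ℚ) * ((2 * i).choose i : ℚ)) * (-X) ^ i * (1 + X) ^ (2 * n - 2 * i) := by
      rw [hins, Finset.sum_insert (by simp), h0]
    have hsplit : ∑ i ∈ Icc 1 n, C (coefD n i) * (-X) ^ i * (1 + X) ^ (2 * n - 2 * i)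
        = (∑ i ∈ Icc 1 n,
            C ((n.choose i : ℚ) * ((2 * i).choose i : ℚ)) * (-X) ^ i * (1 + X) ^ (2 * n - 2 * i))
          - ∑ i ∈ Icc 2 n,
            C ((n : ℚ) * (catalan (i - 1)) * ((n - 2).choose (i - 2))) * (-X) ^ i
              * (1 + X) ^ (2 * n - 2 * i) := by
      have hY : ∑ i ∈ Icc 1 n,
            C (if 2 ≤ i then (n : ℚ) * (catalan (i - 1)) * ((n - 2).choose (i - 2)) else 0)
              * (-X) ^ i * (1 + X) ^ (2 * n - 2 * i)
          = ∑ i ∈ Icc 2 n,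
            C ((n : ℚ) * (catalan (i - 1)) * ((n - 2).choose (i - 2))) * (-X) ^ i
              * (1 + X) ^ (2 * n - 2 * i) := by
        rw [← Finset.sum_subset (show Icc 2 n ⊆ Icc 1 n by
          intro x hx; simp only [Finset.mem_Icc] at hx ⊢; omega)]
        · refine Finset.sum_congr rfl fun i hi => ?_
          have : 2 ≤ i := by simp only [Finset.mem_Icc] at hi; omega
          rw [if_pos this]
        · intro i hi1 hi2
          have : ¬ 2 ≤ i := by simp only [Finset.mem_Icc] at hi1 hi2; omega
          rw [if_neg this, map_zero, zero_mul, zero_mul]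
      rw [← hY, ← Finset.sum_sub_distrib]
      refine Finset.sum_congr rfl fun i hi => ?_
      rw [coefD, map_sub]
      ring
    rw [hBsum, hsplit]
    ring
  · intro i hi
    simp only [Finset.mem_Icc] at hi
    exact coefD_nonneg n i hi.1 hi.2
end

section
/- For every n >= 1, d/dx ( x N(A_n, x) ) = N(B_n, x) + n x N(A_{n-1}, x), and d/dx ( N(B_n,x) + n x N(A_{n-1},x) ) = n(n+1) N(A_{n-1},x). -/
open Polynomial Finset

lemma coeffA (n k : ℕ) : (narayanaA n).coeff k =
    if k ≤ n then (1 / ((n : ℚ) + 1)) * ((n + 1).choose (k + 1)) * ((n + 1).choose k) else 0 := by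
  rw [narayanaA, Polynomial.finset_sum_coeff]
  simp only [Polynomial.coeff_C_mul, Polynomial.coeff_X_pow, mul_ite, mul_one, mul_zero]
  rw [Finset.sum_ite_eq (Finset.range (n + 1)) k]
  simp [Nat.lt_succ_iff]

lemma coeffB (n k : ℕ) : (narayanaB n).coeff k =
    if k ≤ n then ((n.choose k : ℚ)) ^ 2 else 0 := by
  rw [narayanaB, Polynomial.finset_sum_coeff]
  simp only [Polynomial.coeff_C_mul, Polynomial.coeff_X_pow, mul_ite, mul_one, mul_zero]
  rw [Finset.sum_ite_eq (Finset.range (n + 1)) k]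
  simp [Nat.lt_succ_iff]

lemma qchoose (n k : ℕ) : ((n:ℚ)+1) * (n.choose k) = ((n+1).choose (k+1)) * ((k:ℚ)+1) := by
  have h := congrArg (fun m : ℕ => (m : ℚ)) (Nat.add_one_mul_choose_eq n k)
  push_cast at h
  linarith [h]

lemma qpascal (n k : ℕ) : (((n+1).choose (k+1) : ℚ)) = (n.choose k : ℚ) + (n.choose (k+1) : ℚ) := by
  rw [Nat.choose_succ_succ]; push_cast; ring

theorem stmt18 (n : ℕ) (hn : 1 ≤ n) :
    derivative (X * narayanaA n) = narayanaB n + C (n : ℚ) * X * narayanaA (n - 1) ∧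
    derivative (narayanaB n + C (n : ℚ) * X * narayanaA (n - 1)) =
      C ((n : ℚ) * ((n : ℚ) + 1)) * narayanaA (n - 1) := by
  obtain ⟨m, rfl⟩ : ∃ m, n = m + 1 := ⟨n - 1, (Nat.succ_pred_eq_of_pos hn).symm⟩
  have hm2 : ((m:ℚ)+2) ≠ 0 := by positivity
  have hm1 : ((m:ℚ)+1) ≠ 0 := by positivity
  simp only [Nat.add_sub_cancel]
  constructor
  · ext k
    rw [Polynomial.coeff_derivative, Polynomial.coeff_X_mul, mul_assoc, Polynomial.coeff_add,
      Polynomial.coeff_C_mul]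
    cases k with
    | zero =>
      simp only [coeffA, coeffB]
      norm_num
      field_simp
    | succ j =>
      rw [Polynomial.coeff_X_mul, coeffA, coeffA, coeffB]
      push_cast
      by_cases hj : j ≤ m
      · rw [if_pos (by omega), if_pos (by omega), if_pos hj]
        have h1 := qchoose (m+1) (j+1)
        have h2 := qpascal (m+1) j
        push_cast at h1 h2
        field_simp
        linear_combination (-((m + 1 + 1).choose (j + 1) : ℚ)) * h1 +
          (((m:ℚ)+2) * ((m + 1).choose (j + 1) : ℚ)) * h2
      · rw [if_neg (by omega), if_neg (by omega), if_neg hj]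
        ring
  · ext k
    rw [Polynomial.coeff_derivative, Polynomial.coeff_add, mul_assoc, Polynomial.coeff_C_mul,
      Polynomial.coeff_X_mul, Polynomial.coeff_C_mul, coeffA, coeffB]
    push_cast
    by_cases hk : k ≤ m
    · rw [if_pos (by omega), if_pos hk]
      have h1 := qchoose (m+1) k
      have h2 := qpascal (m+1) k
      push_cast at h1 h2
      field_simp
      linear_combination (-((m + 1).choose (k + 1) : ℚ)) * h1 +
        (-((k:ℚ)+1) * ((m + 1).choose (k + 1) : ℚ)) * h2
    · rw [if_neg (by omega), if_neg hk]
      ring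
end
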